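/- The collection M = {M(n)}_{n≥1} with the composition maps γ is a planar operad of sets; explicitly: (a) the unit element I = (0,0) ∈ M(1) satisfies γ(I; 𝐦) = 𝐦 for all 𝐦 ∈ M(l) and γ(𝐤; I, …, I) = 𝐤 for all 𝐤 ∈ M(n); (b) the compositions are associative: for 𝐤 ∈ M(n), 𝐦_i ∈ M(l_i) (1 ≤ i ≤ n) and 𝐩^i_t ∈ M(q^i_t) (1 ≤ i ≤ n, 1 ≤ t ≤ l_i), one has γ(γ(𝐤; 𝐦_1,…,𝐦_n); 𝐩^1_1,…,𝐩^1_{l_1},…,𝐩^n_1,…,𝐩^n_{l_n}) = γ(𝐤; γ(𝐦_1; 𝐩^1_1,…,𝐩^1_{l_1}), …, γ(𝐦_n; 𝐩^n_1,…,𝐩^n_{l_n})). -/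

import Mathlib

/-- Add `k` to the first entry of a list (the list `[k]` if the list is empty). -/
def molAddHead (k : ℕ) : List ℕ → List ℕ
  | [] => [k]
  | a :: as => (k + a) :: as

/-- The composition `γ(𝐤; 𝐦₁, …, 𝐦ₙ)` of the master operad `M`:
an element of `M(n)` is a tuple `(k₀, …, kₙ)` of naturals, encoded as a list of length `n+1`,
and the composition is
`(k₀+m¹₀, m¹₁, …, m¹_{l₁−1}, k₁+m¹_{l₁}+m²₀, m²₁, …, …, kₙ₋₁+mⁿ⁻¹_{lₙ₋₁}+mⁿ₀, mⁿ₁, …, kₙ+mⁿ_{lₙ})`. -/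
def molComp : List ℕ → List (List ℕ) → List ℕ
  | ks, [] => ks
  | [], _ :: _ => []
  | k :: ks, m :: ms =>
      molAddHead k (m.dropLast ++ molAddHead (m.getLastD 0) (molComp ks ms))

lemma molAddHead_ne_nil (k : ℕ) (l : List ℕ) : molAddHead k l ≠ [] := by
  cases l <;> simp [molAddHead]

lemma molAddHead_append (k : ℕ) (xs ys : List ℕ) (h : xs ≠ []) :
    molAddHead k (xs ++ ys) = molAddHead k xs ++ ys := by
  cases xs with
  | nil => simp at h
  | cons a as => simp [molAddHead]

lemma molAddHead_add (a c : ℕ) (w : List ℕ) :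
    molAddHead (a + c) w = molAddHead a (molAddHead c w) := by
  cases w <;> simp [molAddHead, add_assoc]

lemma molAddHead_length (k : ℕ) (l : List ℕ) (h : l ≠ []) :
    (molAddHead k l).length = l.length := by
  cases l with
  | nil => simp at h
  | cons a as => rfl

lemma molAddHead_zero (l : List ℕ) (h : l ≠ []) : molAddHead 0 l = l := by
  cases l with
  | nil => simp at h
  | cons a as => simp [molAddHead]

lemma molComp_nil (k : List ℕ) : molComp k [] = k := by
  cases k <;> rfl

lemma molComp_cons (a : ℕ) (ks : List ℕ) (m : List ℕ) (ms : List (List ℕ)) :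
    molComp (a :: ks) (m :: ms)
      = molAddHead a (m.dropLast ++ molAddHead (m.getLastD 0) (molComp ks ms)) := rfl

lemma molComp_ne_nil (k : List ℕ) (ms : List (List ℕ)) (h : k ≠ []) :
    molComp k ms ≠ [] := by
  match k, ms with
  | k, [] => simpa [molComp_nil]
  | [], _ :: _ => simp at h
  | k :: ks, m :: ms => rw [molComp_cons]; exact molAddHead_ne_nil _ _

lemma dropLast_append_getLastD (l : List ℕ) (h : l ≠ []) :
    l.dropLast ++ [l.getLastD 0] = l := by
  induction l with
  | nil => simp at h
  | cons a as ih =>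
      cases as with
      | nil => rfl
      | cons b bs =>
          simp only [List.dropLast_cons₂, List.getLastD_cons, List.cons_append, List.getLastD_eq_getLast?] at ih ⊢
          simp [ih]

lemma getLastD_append' (xs : List ℕ) (c : ℕ) (cs : List ℕ) : ∀ d,
    (xs ++ c :: cs).getLastD d = (c :: cs).getLastD 0 := by
  induction xs with
  | nil => intro d; rw [List.nil_append, List.getLastD_cons, List.getLastD_cons]
  | cons a xs ih => intro d; rw [List.cons_append, List.getLastD_cons]; exact ih a

lemma molAddHead_dropLast_getLastD (c : ℕ) (w : List ℕ) (h : w ≠ []) (r : List ℕ) :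
    (molAddHead c w).dropLast ++ molAddHead ((molAddHead c w).getLastD 0) r
      = molAddHead c (w.dropLast ++ molAddHead (w.getLastD 0) r) := by
  match w with
  | [x] => cases r <;> simp [molAddHead, add_assoc]
  | x :: y :: ys =>
      show ((c + x) :: y :: ys).dropLast ++ molAddHead (((c + x) :: y :: ys).getLastD 0) r
        = molAddHead c ((x :: y :: ys).dropLast ++ molAddHead ((x :: y :: ys).getLastD 0) r)
      rw [List.dropLast_cons₂, List.dropLast_cons₂, List.getLastD_cons, List.getLastD_cons,
        List.getLastD_cons, List.getLastD_cons, List.cons_append]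
      simp [molAddHead]

lemma molComp_append (k1 k2 : List ℕ) (ms1 ms2 : List (List ℕ))
    (h : k1.length = ms1.length) :
    molComp (k1 ++ k2) (ms1 ++ ms2) = molComp (k1 ++ molComp k2 ms2) ms1 := by
  induction ms1 generalizing k1 with
  | nil =>
      rw [List.length_nil, List.length_eq_zero_iff] at h
      subst h; simp [molComp_nil]
  | cons m ms1 ih =>
      match k1 with
      | a :: k1 =>
          rw [List.cons_append, List.cons_append, molComp_cons, List.cons_append,
            molComp_cons, ih k1 (by simpa using h)]

lemma molComp_molAddHead (a : ℕ) (t : List ℕ) (ht : t ≠ []) (ps : List (List ℕ)) :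
    molComp (molAddHead a t) ps = molAddHead a (molComp t ps) := by
  match t, ps with
  | t, [] => simp [molComp_nil]
  | c :: cs, p :: ps =>
      show molComp ((a + c) :: cs) (p :: ps) = _
      rw [molComp_cons, molComp_cons, molAddHead_add]

lemma molComp_tail (pl : List (List ℕ)) (m : List ℕ) (r : List ℕ)
    (h : m.length = pl.length + 1) :
    molComp (m.dropLast ++ molAddHead (m.getLastD 0) r) pl
      = (molComp m pl).dropLast ++ molAddHead ((molComp m pl).getLastD 0) r := by
  induction pl generalizing m r with
  | nil =>
      match m, h with
      | [x], _ => simp [molComp_nil, molAddHead]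
  | cons p pl ih =>
      match m, h with
      | c :: d :: ds, h =>
        set ks := d :: ds with hks
        have hks' : ks ≠ [] := by simp [hks]
        have hlen : ks.length = pl.length + 1 := by simpa [hks] using h
        have hdl : (c :: ks).dropLast = c :: ks.dropLast := by
          rw [hks]; exact List.dropLast_cons₂
        have hgl : (c :: ks).getLastD 0 = ks.getLastD 0 := by
          simp [hks, List.getLastD_cons]
        rw [hdl, hgl, List.cons_append, molComp_cons, ih ks r hlen, molComp_cons]
        set u := molComp ks pl with hu
        have hu' : u ≠ [] := molComp_ne_nil _ _ hks'
        rw [molAddHead_dropLast_getLastD _ _ (by simp [molAddHead_ne_nil]) r]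
        rw [List.dropLast_append_of_ne_nil (molAddHead_ne_nil _ u)]
        have : (p.dropLast ++ molAddHead (p.getLastD 0) u).getLastD 0
            = (molAddHead (p.getLastD 0) u).getLastD 0 := by
          obtain ⟨e, es, hx⟩ := List.exists_cons_of_ne_nil (molAddHead_ne_nil (p.getLastD 0) u)
          rw [hx]; exact getLastD_append' _ e es 0
        rw [this, List.append_assoc, molAddHead_dropLast_getLastD _ u hu' r]

lemma molComp_replicate : ∀ (n : ℕ) (k : List ℕ), k.length = n + 1 →
    molComp k (List.replicate n [0, 0]) = k := by
  intro n
  induction n with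
  | zero => intro k _; exact molComp_nil k
  | succ n ih =>
      intro k hk
      match k with
      | a :: ks =>
          have hks : ks.length = n + 1 := by simpa using hk
          have hne : ks ≠ [] := by intro h; simp [h] at hks
          rw [List.replicate_succ, molComp_cons, ih ks hks]
          show molAddHead a ([0] ++ molAddHead 0 ks) = a :: ks
          rw [molAddHead_zero ks hne]
          show (a + 0) :: ks = a :: ks
          rw [Nat.add_zero]

lemma molAssocAux : ∀ (ms : List (List ℕ)) (ps : List (List (List ℕ))),
    List.Forall₂ (fun (m : List ℕ) (pl : List (List ℕ)) => pl.length + 1 = m.length) ms ps →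
    (∀ m ∈ ms, 2 ≤ m.length) →
    ∀ k : List ℕ, k.length = ms.length + 1 →
    molComp (molComp k ms) ps.flatten =
      molComp k (List.zipWith (fun m pl => molComp m pl) ms ps) := by
  intro ms ps h
  induction h with
  | nil => intro _ k _; simp [molComp_nil]
  | @cons m pl ms ps hmp h ih =>
      intro h2 k hk
      match k with
      | a :: ks =>
          have hks : ks.length = ms.length + 1 := by simpa using hk
          have hksne : ks ≠ [] := by intro hh; simp [hh] at hks
          have hm2 : 2 ≤ m.length := h2 m (by simp)
          have hd : m.dropLast ≠ [] := by
            intro hh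
            have h3 := congrArg List.length hh
            rw [List.length_dropLast, List.length_nil] at h3
            omega
          have hdl : (molAddHead a m.dropLast).length = pl.length := by
            rw [molAddHead_length a _ hd, List.length_dropLast, ← hmp]
            omega
          have hX : molComp ks ms ≠ [] := molComp_ne_nil _ _ hksne
          rw [List.flatten_cons, molComp_cons,
            molAddHead_append a _ _ hd,
            molComp_append _ _ _ _ hdl,
            molComp_molAddHead _ _ hX,
            ih (fun x hx => h2 x (by simp [hx])) ks hks,
            ← molAddHead_append a _ _ hd,
            molComp_molAddHead a _ (fun hh => hd (List.append_eq_nil_iff.mp hh).1),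
            molComp_tail pl m _ hmp.symm,
            List.zipWith_cons_cons, molComp_cons]

/-- The collection `M = {M(n)}_{n≥1}`, `M(n) = ℕ^{n+1}`, with the composition maps `γ`
is a planar operad of sets: the tuple `I = (0,0) ∈ M(1)` is a unit and `γ` is associative. -/
theorem master_operad_is_planar_operad :
    -- (a) unit: γ(I; 𝐦) = 𝐦 for all 𝐦 ∈ M(l)
    (∀ (l : ℕ) (m : List ℕ), 1 ≤ l → m.length = l + 1 →
      molComp [0, 0] [m] = m) ∧
    -- (a) unit: γ(𝐤; I, …, I) = 𝐤 for all 𝐤 ∈ M(n)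
    (∀ (n : ℕ) (k : List ℕ), 1 ≤ n → k.length = n + 1 →
      molComp k (List.replicate n [0, 0]) = k) ∧
    -- (b) associativity
    (∀ (n : ℕ) (k : List ℕ) (ms : List (List ℕ)) (ps : List (List (List ℕ))),
      1 ≤ n → k.length = n + 1 → ms.length = n → ps.length = n →
      (∀ m ∈ ms, 2 ≤ m.length) →
      (∀ pl ∈ ps, ∀ p ∈ pl, 2 ≤ p.length) →
      List.Forall₂ (fun (m : List ℕ) (pl : List (List ℕ)) => pl.length + 1 = m.length) ms ps →
      molComp (molComp k ms) ps.flatten =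
        molComp k (List.zipWith (fun m pl => molComp m pl) ms ps)) := by
  refine ⟨?_, ?_, ?_⟩
  · intro l m _ hm
    have hne : m ≠ [] := by intro h; simp [h] at hm
    rw [molComp_cons, molComp_nil]
    have h0 : molAddHead (m.getLastD 0) [0] = [m.getLastD 0] := by simp [molAddHead]
    rw [h0, dropLast_append_getLastD m hne, molAddHead_zero m hne]
  · intro n k _ hk
    exact molComp_replicate n k hk
  · intro n k ms ps _ hk hms _ hm2 _ hf
    exact molAssocAux ms ps hf hm2 k (by rw [hms]; exact hk)
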